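/- arXiv:2512.01138 — 2 statements merged into one kernel-verified Lean document; each statement's English description precedes it below -/
import Mathlib

section
/- Let V be a finite set, f, g : V → V, and u ∈ V. Set v := g(u) and v′ := g(f(u)). Then at least one of u, f(u), v, v′ is a Nephew solution for (f, g), or ℓ_f(v) ≥ 2, or ℓ_f(v′) ≥ 2. -/
/-- An element `v` is a *Nephew solution* for `(f, g)` if
`f (f (g v)) ≠ f v` or `f (g v) = v`. -/
def NephewSol {V : Type*} (f g : V → V) (v : V) : Prop :=
  f (f (g v)) ≠ f v ∨ f (g v) = v

/-- `w` is a periodic point of `f`: some positive iterate of `f` fixes `w`. -/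
def NephewPeriodic {V : Type*} (f : V → V) (w : V) : Prop :=
  ∃ k : ℕ, 1 ≤ k ∧ f^[k] w = w

/-- The *level* of `v`: the least `k ≥ 0` such that `f^[k] v` is a periodic point. -/
noncomputable def level {V : Type*} (f : V → V) (v : V) : ℕ :=
  sInf {k : ℕ | NephewPeriodic f (f^[k] v)}

lemma nephewPeriodic_map {V : Type*} (f : V → V) {w : V} (h : NephewPeriodic f w) :
    NephewPeriodic f (f w) := by
  obtain ⟨k, hk, hw⟩ := h
  exact ⟨k, hk, by rw [← Function.iterate_succ_apply, Function.iterate_succ_apply', hw]⟩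

lemma nephewPeriodic_inj {V : Type*} (f : V → V) {a b : V} (ha : NephewPeriodic f a)
    (hb : NephewPeriodic f b) (h : f a = f b) : a = b := by
  obtain ⟨k, hk, hka⟩ := ha
  obtain ⟨l, hl, hlb⟩ := hb
  have hka' : f^[k * l] a = a := by
    rw [Function.iterate_mul]; exact Function.iterate_fixed hka l
  have hlb' : f^[k * l] b = b := by
    rw [mul_comm, Function.iterate_mul]; exact Function.iterate_fixed hlb k
  have hpos : 0 < k * l := Nat.mul_pos hk hl
  calc a = f^[k * l] a := hka'.symm
    _ = f^[k * l - 1] (f a) := by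
        rw [← Function.iterate_succ_apply]; congr 1; omega
    _ = f^[k * l - 1] (f b) := by rw [h]
    _ = f^[k * l] b := by
        rw [← Function.iterate_succ_apply]; congr 1; omega
    _ = b := hlb'

lemma level_le_one {V : Type*} [Finite V] (f : V → V) {v : V} (h : level f v ≤ 1) :
    NephewPeriodic f (f v) := by
  have hne : {k : ℕ | NephewPeriodic f (f^[k] v)}.Nonempty := by
    obtain ⟨m, n, hmn, heq⟩ := Finite.exists_ne_map_eq_of_infinite (fun n : ℕ => f^[n] v)
    rcases hmn.lt_or_gt with hlt | hlt
    · refine ⟨m, n - m, by omega, ?_⟩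
      rw [← Function.iterate_add_apply, Nat.sub_add_cancel hlt.le]
      exact heq.symm
    · refine ⟨n, m - n, by omega, ?_⟩
      rw [← Function.iterate_add_apply, Nat.sub_add_cancel hlt.le]
      exact heq
  have hmem : NephewPeriodic f (f^[level f v] v) := Nat.sInf_mem hne
  interval_cases h' : level f v
  · simpa using nephewPeriodic_map f hmem
  · simpa using hmem

/-- **Pair of vertices lemma.** Starting from any `u`, with `v = g u` and
`v' = g (f u)`: either one of `u`, `f u`, `v`, `v'` is a Nephew solution, or one of
`v`, `v'` has level at least `2`. -/
theorem pair_of_vertices {V : Type*} [Finite V] (f g : V → V) (u : V) :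
    NephewSol f g u ∨ NephewSol f g (f u) ∨
    NephewSol f g (g u) ∨ NephewSol f g (g (f u)) ∨
    2 ≤ level f (g u) ∨ 2 ≤ level f (g (f u)) := by
  by_contra hc
  push_neg at hc
  obtain ⟨h1, h2, _, _, h5, h6⟩ := hc
  simp only [NephewSol, not_or, not_ne_iff] at h1 h2
  have hv : NephewPeriodic f (f (g u)) := level_le_one f (by omega)
  have hv' : NephewPeriodic f (f (g (f u))) := level_le_one f (by omega)
  have hfu : NephewPeriodic f (f u) := h1.1 ▸ nephewPeriodic_map f hv
  have : f (g (f u)) = f u := by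
    refine nephewPeriodic_inj f hv' hfu ?_
    exact h2.1
  exact h2.2 this
end

section
/- Let V be a finite set, f, g : V → V, and u ∈ V with ℓ_f(u) = 0 (that is, u is a periodic point of f). If u is not a Nephew solution for (f, g), then ℓ_f(g(u)) = 2. -/
lemma nephewPeriodic_apply {V : Type*} (f : V → V) (w : V) (h : NephewPeriodic f w) :
    NephewPeriodic f (f w) := by
  obtain ⟨k, hk, hw⟩ := h
  exact ⟨k, hk, by rw [← Function.iterate_succ_apply, Function.iterate_succ_apply', hw]⟩

lemma nephew_exists_periodic {V : Type*} [Finite V] (f : V → V) (v : V) :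
    ∃ k, NephewPeriodic f (f^[k] v) := by
  obtain ⟨a, b, hne, heq⟩ := Finite.exists_ne_map_eq_of_infinite (fun n : ℕ => f^[n] v)
  wlog hab : a < b generalizing a b
  · exact this b a hne.symm heq.symm (by omega)
  refine ⟨a, b - a, by omega, ?_⟩
  rw [← Function.iterate_add_apply, show b - a + a = b by omega]
  exact heq.symm

/-- If `u` is a periodic point of `f` (level `0`) and `u` is not a Nephew solution,
then `g u` has level exactly `2`. -/
theorem level_g_of_periodic {V : Type*} [Finite V] (f g : V → V) (u : V)
    (hu : level f u = 0) (hsol : ¬ NephewSol f g u) :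
    level f (g u) = 2 := by
  unfold NephewSol at hsol
  push_neg at hsol
  obtain ⟨h1, h2⟩ := hsol
  have hu0 : NephewPeriodic f u := by
    have hne : {k : ℕ | NephewPeriodic f (f^[k] u)}.Nonempty := nephew_exists_periodic f u
    have h0 := Nat.sInf_mem hne
    rw [show sInf {k : ℕ | NephewPeriodic f (f^[k] u)} = level f u from rfl, hu] at h0
    simpa using h0
  have not_p1 : ¬ NephewPeriodic f (f (g u)) := by
    rintro ⟨k, hk, hfk⟩
    obtain ⟨m, hm, hum⟩ := hu0
    obtain ⟨j, rfl⟩ : ∃ j, k = j + 1 := ⟨k - 1, by omega⟩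
    have e1 : f (g u) = f^[j + 1] u := by
      calc f (g u) = f^[j + 1] (f (g u)) := hfk.symm
        _ = f^[j] (f (f (g u))) := Function.iterate_succ_apply f j _
        _ = f^[j] (f u) := by rw [h1]
        _ = f^[j + 1] u := (Function.iterate_succ_apply f j u).symm
    have e2 : f^[j + 2] u = f u := by
      rw [show j + 2 = (j + 1) + 1 by omega, Function.iterate_succ_apply', ← e1, h1]
    have e3 : f^[j + 1] u = u := by
      calc f^[j + 1] u = f^[j + 1] (f^[m] u) := by rw [hum]
        _ = f^[m - 1] (f^[j + 2] u) := by
            rw [← Function.iterate_add_apply, ← Function.iterate_add_apply]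
            congr 1; omega
        _ = f^[m - 1] (f u) := by rw [e2]
        _ = f^[m] u := by
            rw [← Function.iterate_succ_apply]
            congr 1; omega
        _ = u := hum
    exact h2 (e1.trans e3)
  have not_p0 : ¬ NephewPeriodic f (g u) := fun h => not_p1 (nephewPeriodic_apply f _ h)
  have mem2 : (2 : ℕ) ∈ {k : ℕ | NephewPeriodic f (f^[k] (g u))} := by
    show NephewPeriodic f (f^[2] (g u))
    have : f^[2] (g u) = f u := h1
    rw [this]
    exact nephewPeriodic_apply f u hu0
  unfold level
  have hle := Nat.sInf_le mem2
  have hmem := Nat.sInf_mem (⟨2, mem2⟩ : {k : ℕ | NephewPeriodic f (f^[k] (g u))}.Nonempty)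
  set n := sInf {k : ℕ | NephewPeriodic f (f^[k] (g u))} with hn
  have : n = 0 ∨ n = 1 ∨ n = 2 := by omega
  rcases this with h | h | h
  · rw [h] at hmem; simp only [Set.mem_setOf_eq, Function.iterate_zero_apply] at hmem
    exact absurd hmem not_p0
  · rw [h] at hmem; simp only [Set.mem_setOf_eq, Function.iterate_one] at hmem
    exact absurd hmem not_p1
  · exact h
end
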